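/- Let μ and ν be finite signed measures on a measurable space and f a bounded measurable function on the r-fold product. Then for r ∈ ℕ and a small real t, (μ + tν)^{⊗r}(f) = μ^{⊗r}(f) + t·∑_{j=1}^r (μ^{⊗(j−1)} ⊗ ν ⊗ μ^{⊗(r−j)})(f) + O(t²), where the O(t²) term is bounded by t²·2^r·‖f‖_∞·(‖μ‖ + ‖ν‖)^r. -/

import Mathlib

open MeasureTheory Finset

/-- Integral of a bounded function against the product of finite signed measures,
defined through the Jordan decompositions of the factors. -/
noncomputable def signedPiIntegral {α : Type*} [MeasurableSpace α] {r : ℕ}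
    (ss : Fin r → SignedMeasure α) (f : (Fin r → α) → ℝ) : ℝ :=
  ∑ ε : Fin r → Bool,
    ((-1 : ℝ) ^ (Finset.univ.filter (fun i => ε i = false)).card) *
      ∫ x, f x ∂(Measure.pi fun i =>
        if ε i then (ss i).toJordanDecomposition.posPart
        else (ss i).toJordanDecomposition.negPart)

/-- Total variation norm of a finite signed measure. -/
noncomputable def tvNorm {α : Type*} [MeasurableSpace α] (s : SignedMeasure α) : ℝ :=
  (s.totalVariation Set.univ).toReal

open scoped ENNReal NNReal

namespace Stmt12Aux

variable {α : Type*} [MeasurableSpace α] {r : ℕ}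
variable {f : (Fin r → α) → ℝ} {C : ℝ}



/-- chosen Jordan part -/
noncomputable def jpart (b : Bool) (s : SignedMeasure α) : Measure α :=
  if b then s.toJordanDecomposition.posPart else s.toJordanDecomposition.negPart

instance (b : Bool) (s : SignedMeasure α) : IsFiniteMeasure (jpart b s) := by
  unfold jpart; cases b <;> simp <;> infer_instance

/-- sign of a pattern -/
noncomputable def sgn {r : ℕ} (ε : Fin r → Bool) : ℝ :=
  (-1 : ℝ) ^ (Finset.univ.filter (fun i => ε i = false)).card

lemma jpart_tosm (s : SignedMeasure α) :
    (jpart true s).toSignedMeasure - (jpart false s).toSignedMeasure = s := by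
  simpa [jpart, JordanDecomposition.toSignedMeasure] using
    s.toSignedMeasure_toJordanDecomposition

lemma jpart_add (a b : SignedMeasure α) :
    jpart true (a + b) + (jpart false a + jpart false b)
      = jpart false (a + b) + (jpart true a + jpart true b) := by
  rw [← Measure.toSignedMeasure_eq_toSignedMeasure_iff]
  simp only [Measure.toSignedMeasure_add]
  have ha := jpart_tosm a
  have hb := jpart_tosm b
  have hab := jpart_tosm (a + b)
  have h : (jpart true (a+b)).toSignedMeasure - (jpart false (a+b)).toSignedMeasure
      = ((jpart true a).toSignedMeasure + (jpart true b).toSignedMeasure)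
        - ((jpart false a).toSignedMeasure + (jpart false b).toSignedMeasure) := by
    rw [hab, ← sub_add_sub_comm, ha, hb]
  rw [sub_eq_sub_iff_add_eq_add] at h
  rw [h]; abel

lemma jpart_smul_nonneg (c : ℝ) (hc : 0 ≤ c) (b : Bool) (s : SignedMeasure α) :
    jpart b (c • s) = c.toNNReal • jpart b s := by
  cases b <;>
    simp [jpart, SignedMeasure.toJordanDecomposition_smul_real,
      JordanDecomposition.real_smul_posPart_nonneg _ _ hc,
      JordanDecomposition.real_smul_negPart_nonneg _ _ hc]

lemma jpart_smul_neg (c : ℝ) (hc : c < 0) (b : Bool) (s : SignedMeasure α) :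
    jpart b (c • s) = (-c).toNNReal • jpart (!b) s := by
  cases b <;>
    simp [jpart, SignedMeasure.toJordanDecomposition_smul_real,
      JordanDecomposition.real_smul_posPart_neg _ _ hc,
      JordanDecomposition.real_smul_negPart_neg _ _ hc]




lemma isFiniteMeasure_update (m : Fin r → Measure α)
    [hm : ∀ i, IsFiniteMeasure (m i)] (j : Fin r) (κ : Measure α) [IsFiniteMeasure κ] :
    ∀ i, IsFiniteMeasure (Function.update m j κ i) := fun i => by
  rcases eq_or_ne i j with rfl | hne
  · rw [Function.update_self]; infer_instance
  · rw [Function.update_of_ne hne]; infer_instance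

lemma pi_update_add (m : Fin r → Measure α)
    [∀ i, IsFiniteMeasure (m i)] (j : Fin r) (κ₁ κ₂ : Measure α)
    [IsFiniteMeasure κ₁] [IsFiniteMeasure κ₂] :
    Measure.pi (Function.update m j (κ₁ + κ₂))
      = Measure.pi (Function.update m j κ₁) + Measure.pi (Function.update m j κ₂) := by
  haveI h0 := isFiniteMeasure_update m j (κ₁ + κ₂)
  haveI h1 := isFiniteMeasure_update m j κ₁
  haveI h2 := isFiniteMeasure_update m j κ₂
  haveI s0 : ∀ i, SigmaFinite (Function.update m j (κ₁ + κ₂) i) := fun i =>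
    haveI := h0 i; inferInstance
  haveI s1 : ∀ i, SigmaFinite (Function.update m j κ₁ i) := fun i =>
    haveI := h1 i; inferInstance
  haveI s2 : ∀ i, SigmaFinite (Function.update m j κ₂ i) := fun i =>
    haveI := h2 i; inferInstance
  refine Measure.pi_eq (μ := Function.update m j (κ₁ + κ₂)) fun s hs => ?_
  have key : ∀ κ : Measure α, ∏ i, (Function.update m j κ i) (s i)
      = κ (s j) * ∏ i ∈ Finset.univ.erase j, m i (s i) := by
    intro κ
    rw [← Finset.prod_erase_mul _ _ (Finset.mem_univ j), Function.update_self, mul_comm]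
    congr 1
    refine Finset.prod_congr rfl fun i hi => ?_
    rw [Function.update_of_ne (Finset.ne_of_mem_erase hi)]
  rw [Measure.add_apply, Measure.pi_pi, Measure.pi_pi, key, key, key,
    Measure.add_apply, add_mul]

lemma pi_update_smul (m : Fin r → Measure α)
    [∀ i, IsFiniteMeasure (m i)] (j : Fin r) (c : ℝ≥0) (κ : Measure α)
    [IsFiniteMeasure κ] :
    Measure.pi (Function.update m j (c • κ))
      = (c : ℝ≥0∞) • Measure.pi (Function.update m j κ) := by
  haveI h0 := isFiniteMeasure_update m j (c • κ)
  haveI h1 := isFiniteMeasure_update m j κ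
  haveI s0 : ∀ i, SigmaFinite (Function.update m j (c • κ) i) := fun i =>
    haveI := h0 i; inferInstance
  haveI s1 : ∀ i, SigmaFinite (Function.update m j κ i) := fun i =>
    haveI := h1 i; inferInstance
  refine Measure.pi_eq (μ := Function.update m j (c • κ)) fun s hs => ?_
  have key : ∀ κ' : Measure α, ∏ i, (Function.update m j κ' i) (s i)
      = κ' (s j) * ∏ i ∈ Finset.univ.erase j, m i (s i) := by
    intro κ'
    rw [← Finset.prod_erase_mul _ _ (Finset.mem_univ j), Function.update_self, mul_comm]
    congr 1
    refine Finset.prod_congr rfl fun i hi => ?_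
    rw [Function.update_of_ne (Finset.ne_of_mem_erase hi)]
  rw [Measure.smul_apply, Measure.pi_pi, key, key, Measure.smul_apply,
    ENNReal.smul_def, smul_eq_mul, smul_eq_mul, mul_assoc]

def bflip (j : Fin r) (ε : Fin r → Bool) : Fin r → Bool :=
  Function.update ε j (!ε j)

lemma bflip_apply_self (j : Fin r) (ε : Fin r → Bool) :
    bflip j ε j = !ε j := Function.update_self _ _ _

lemma bflip_apply_ne (j : Fin r) (ε : Fin r → Bool) {i : Fin r}
    (h : i ≠ j) : bflip j ε i = ε i := Function.update_of_ne h _ _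

lemma bflip_bflip (j : Fin r) (ε : Fin r → Bool) :
    bflip j (bflip j ε) = ε := by
  funext i
  rcases eq_or_ne i j with rfl | h
  · rw [bflip_apply_self, bflip_apply_self, Bool.not_not]
  · rw [bflip_apply_ne _ _ h, bflip_apply_ne _ _ h]

lemma bflip_ne (j : Fin r) (ε : Fin r → Bool) : bflip j ε ≠ ε := by
  intro h
  have := congrFun h j
  rw [bflip_apply_self] at this
  exact (Bool.not_ne_self (ε j)) this

lemma sgn_bflip (j : Fin r) (ε : Fin r → Bool) :
    sgn (bflip j ε) = - sgn ε := by
  unfold sgn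
  cases h : ε j
  · have hs : (Finset.univ.filter fun i => ε i = false)
        = insert j (Finset.univ.filter fun i => bflip j ε i = false) := by
      ext i
      rcases eq_or_ne i j with rfl | hi
      · simp [h, bflip_apply_self]
      · simp [bflip_apply_ne _ _ hi, hi]
    have hj : j ∉ (Finset.univ.filter fun i => bflip j ε i = false) := by
      simp [bflip_apply_self, h]
    rw [hs, Finset.card_insert_of_notMem hj, pow_succ]
    ring
  · have hs : (Finset.univ.filter fun i => bflip j ε i = false)
        = insert j (Finset.univ.filter fun i => ε i = false) := by
      ext i
      rcases eq_or_ne i j with rfl | hi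
      · simp [h, bflip_apply_self]
      · simp [bflip_apply_ne _ _ hi, hi]
    have hj : j ∉ (Finset.univ.filter fun i => ε i = false) := by simp [h]
    rw [hs, Finset.card_insert_of_notMem hj, pow_succ]
    ring

lemma jfam_update (ss : Fin r → SignedMeasure α) (j : Fin r)
    (x : SignedMeasure α) (ε : Fin r → Bool) :
    (fun i => jpart (ε i) (Function.update ss j x i))
      = Function.update (fun i => jpart (ε i) (ss i)) j (jpart (ε j) x) := by
  funext i
  rcases eq_or_ne i j with rfl | h
  · rw [Function.update_self, Function.update_self]
  · rw [Function.update_of_ne h, Function.update_of_ne h]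

lemma jfam_update_bflip (ss : Fin r → SignedMeasure α) (j : Fin r)
    (x : SignedMeasure α) (ε : Fin r → Bool) :
    (fun i => jpart (bflip j ε i) (Function.update ss j x i))
      = Function.update (fun i => jpart (ε i) (ss i)) j (jpart (!ε j) x) := by
  funext i
  rcases eq_or_ne i j with rfl | h
  · rw [Function.update_self, Function.update_self, bflip_apply_self]
  · rw [Function.update_of_ne h, Function.update_of_ne h, bflip_apply_ne _ _ h]




noncomputable def spiM (ss : Fin r → SignedMeasure α) (f : (Fin r → α) → ℝ)
    (ε : Fin r → Bool) : ℝ :=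
  ∫ x, f x ∂(Measure.pi fun i => jpart (ε i) (ss i))

lemma spi_def (ss : Fin r → SignedMeasure α) (f : (Fin r → α) → ℝ) :
    signedPiIntegral ss f = ∑ ε : Fin r → Bool, sgn ε * spiM ss f ε := rfl

lemma integrable_of_bound (hf : Measurable f) (hC : ∀ x, |f x| ≤ C)
    (m : Measure (Fin r → α)) [IsFiniteMeasure m] : Integrable f m :=
  Integrable.mono' (integrable_const C) hf.aestronglyMeasurable
    (Filter.Eventually.of_forall fun x => by simpa [Real.norm_eq_abs] using hC x)

lemma integral_pi_update_add (hf : Measurable f)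
    (hC : ∀ x, |f x| ≤ C) (m : Fin r → Measure α) [∀ i, IsFiniteMeasure (m i)]
    (j : Fin r) (κ₁ κ₂ : Measure α) [IsFiniteMeasure κ₁] [IsFiniteMeasure κ₂] :
    ∫ x, f x ∂(Measure.pi (Function.update m j (κ₁ + κ₂)))
      = ∫ x, f x ∂(Measure.pi (Function.update m j κ₁))
        + ∫ x, f x ∂(Measure.pi (Function.update m j κ₂)) := by
  haveI h1 := isFiniteMeasure_update m j κ₁
  haveI h2 := isFiniteMeasure_update m j κ₂
  rw [pi_update_add]
  exact integral_add_measure (integrable_of_bound hf hC _) (integrable_of_bound hf hC _)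

lemma integral_pi_update_smul (m : Fin r → Measure α)
    [∀ i, IsFiniteMeasure (m i)] (j : Fin r) (c : ℝ≥0) (κ : Measure α)
    [IsFiniteMeasure κ] :
    ∫ x, f x ∂(Measure.pi (Function.update m j (c • κ)))
      = (c : ℝ) * ∫ x, f x ∂(Measure.pi (Function.update m j κ)) := by
  rw [pi_update_smul, integral_smul_measure]
  simp

lemma integral_pi_update_add3 (hf : Measurable f)
    (hC : ∀ x, |f x| ≤ C) (m : Fin r → Measure α) [∀ i, IsFiniteMeasure (m i)]
    (j : Fin r) {κ₁ κ₂ κ₃ κ₄ κ₅ κ₆ : Measure α}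
    [IsFiniteMeasure κ₁] [IsFiniteMeasure κ₂] [IsFiniteMeasure κ₃]
    [IsFiniteMeasure κ₄] [IsFiniteMeasure κ₅] [IsFiniteMeasure κ₆]
    (h : κ₁ + (κ₂ + κ₃) = κ₄ + (κ₅ + κ₆)) :
    ∫ x, f x ∂(Measure.pi (Function.update m j κ₁))
        + (∫ x, f x ∂(Measure.pi (Function.update m j κ₂))
          + ∫ x, f x ∂(Measure.pi (Function.update m j κ₃)))
      = ∫ x, f x ∂(Measure.pi (Function.update m j κ₄))
        + (∫ x, f x ∂(Measure.pi (Function.update m j κ₅))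
          + ∫ x, f x ∂(Measure.pi (Function.update m j κ₆))) := by
  rw [← integral_pi_update_add hf hC m j κ₂ κ₃, ← integral_pi_update_add hf hC m j κ₁ (κ₂ + κ₃),
    ← integral_pi_update_add hf hC m j κ₅ κ₆, ← integral_pi_update_add hf hC m j κ₄ (κ₅ + κ₆), h]



lemma spi_update_add (hf : Measurable f) (hC : ∀ x, |f x| ≤ C)
    (ss : Fin r → SignedMeasure α) (j : Fin r) (a b : SignedMeasure α) :
    signedPiIntegral (Function.update ss j (a + b)) f
      = signedPiIntegral (Function.update ss j a) f
        + signedPiIntegral (Function.update ss j b) f := by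
  rw [spi_def, spi_def, spi_def, ← Finset.sum_add_distrib, ← sub_eq_zero,
    ← Finset.sum_sub_distrib]
  refine Finset.sum_ninvolution (bflip j) ?_ ?_ (fun ε => Finset.mem_univ _)
    (fun ε => bflip_bflip j ε)
  · intro ε
    have h1 : ∀ x : SignedMeasure α, spiM (Function.update ss j x) f ε
        = ∫ y, f y ∂(Measure.pi (Function.update (fun i => jpart (ε i) (ss i)) j
            (jpart (ε j) x))) := fun x => by
      rw [spiM, jfam_update]
    have h2 : ∀ x : SignedMeasure α, spiM (Function.update ss j x) f (bflip j ε)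
        = ∫ y, f y ∂(Measure.pi (Function.update (fun i => jpart (ε i) (ss i)) j
            (jpart (!ε j) x))) := fun x => by
      rw [spiM, jfam_update_bflip]
    rw [h1, h1, h1, h2, h2, h2, sgn_bflip]
    have key : ∫ y, f y ∂(Measure.pi (Function.update (fun i => jpart (ε i) (ss i)) j
            (jpart (ε j) (a + b))))
          + (∫ y, f y ∂(Measure.pi (Function.update (fun i => jpart (ε i) (ss i)) j
            (jpart (!ε j) a)))
          + ∫ y, f y ∂(Measure.pi (Function.update (fun i => jpart (ε i) (ss i)) j
            (jpart (!ε j) b))))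
        = ∫ y, f y ∂(Measure.pi (Function.update (fun i => jpart (ε i) (ss i)) j
            (jpart (!ε j) (a + b))))
          + (∫ y, f y ∂(Measure.pi (Function.update (fun i => jpart (ε i) (ss i)) j
            (jpart (ε j) a)))
          + ∫ y, f y ∂(Measure.pi (Function.update (fun i => jpart (ε i) (ss i)) j
            (jpart (ε j) b)))) := by
      cases hb : ε j
      · simpa using
          (integral_pi_update_add3 hf hC (fun i => jpart (ε i) (ss i)) j
            (jpart_add a b)).symm
      · simpa using
          integral_pi_update_add3 hf hC (fun i => jpart (ε i) (ss i)) j (jpart_add a b)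
    linear_combination sgn ε * key
  · intro ε _
    exact bflip_ne j ε

lemma spi_update_smul (hf : Measurable f) (hC : ∀ x, |f x| ≤ C)
    (ss : Fin r → SignedMeasure α) (j : Fin r) (c : ℝ) (a : SignedMeasure α) :
    signedPiIntegral (Function.update ss j (c • a)) f
      = c * signedPiIntegral (Function.update ss j a) f := by
  rcases le_or_gt 0 c with hc | hc
  · rw [spi_def, spi_def, Finset.mul_sum]
    refine Finset.sum_congr rfl fun ε _ => ?_
    have h1 : spiM (Function.update ss j (c • a)) f ε
        = c * spiM (Function.update ss j a) f ε := by
      rw [spiM, spiM, jfam_update, jfam_update, jpart_smul_nonneg c hc,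
        integral_pi_update_smul]
      rw [Real.coe_toNNReal c hc]
    rw [h1]; ring
  · rw [spi_def, spi_def, Finset.mul_sum, ← sub_eq_zero, ← Finset.sum_sub_distrib]
    refine Finset.sum_ninvolution (bflip j) ?_ ?_ (fun ε => Finset.mem_univ _)
      (fun ε => bflip_bflip j ε)
    · intro ε
      have hI : ∀ (b : Bool) (x : SignedMeasure α),
          ∫ y, f y ∂(Measure.pi (Function.update (fun i => jpart (ε i) (ss i)) j
            (jpart b (c • x))))
          = (-c) * ∫ y, f y ∂(Measure.pi (Function.update (fun i => jpart (ε i) (ss i)) j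
            (jpart (!b) x))) := by
        intro b x
        rw [jpart_smul_neg c hc, integral_pi_update_smul, Real.coe_toNNReal _ (by linarith)]
      have h1 : spiM (Function.update ss j (c • a)) f ε
          = (-c) * ∫ y, f y ∂(Measure.pi (Function.update (fun i => jpart (ε i) (ss i)) j
              (jpart (!ε j) a))) := by
        rw [spiM, jfam_update, hI]
      have h2 : spiM (Function.update ss j (c • a)) f (bflip j ε)
          = (-c) * ∫ y, f y ∂(Measure.pi (Function.update (fun i => jpart (ε i) (ss i)) j
              (jpart (ε j) a))) := by
        rw [spiM, jfam_update_bflip, hI, Bool.not_not]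
      have h3 : spiM (Function.update ss j a) f ε
          = ∫ y, f y ∂(Measure.pi (Function.update (fun i => jpart (ε i) (ss i)) j
              (jpart (ε j) a))) := by
        rw [spiM, jfam_update]
      have h4 : spiM (Function.update ss j a) f (bflip j ε)
          = ∫ y, f y ∂(Measure.pi (Function.update (fun i => jpart (ε i) (ss i)) j
              (jpart (!ε j) a))) := by
        rw [spiM, jfam_update_bflip]
      rw [h1, h2, h3, h4, sgn_bflip]
      ring
    · intro ε _
      exact bflip_ne j ε

noncomputable def spiMap (f : (Fin r → α) → ℝ) (hf : Measurable f) (C : ℝ)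
    (hC : ∀ x, |f x| ≤ C) :
    MultilinearMap ℝ (fun _ : Fin r => SignedMeasure α) ℝ where
  toFun ss := signedPiIntegral ss f
  map_update_add' := by
    intro inst ss j a b
    obtain rfl := Subsingleton.elim inst (instDecidableEqFin r)
    exact spi_update_add hf hC ss j a b
  map_update_smul' := by
    intro inst ss j c a
    obtain rfl := Subsingleton.elim inst (instDecidableEqFin r)
    simpa [smul_eq_mul] using spi_update_smul hf hC ss j c a

lemma tvNorm_eq (s : SignedMeasure α) :
    tvNorm s = (jpart true s Set.univ).toReal + (jpart false s Set.univ).toReal := by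
  rw [tvNorm, SignedMeasure.totalVariation, Measure.add_apply,
    ENNReal.toReal_add (measure_ne_top _ _) (measure_ne_top _ _)]
  simp [jpart]

lemma tvNorm_nonneg (s : SignedMeasure α) : 0 ≤ tvNorm s := ENNReal.toReal_nonneg

lemma abs_sgn (ε : Fin r → Bool) : |sgn ε| = 1 := by
  unfold sgn
  rw [abs_pow, abs_neg, abs_one, one_pow]

lemma abs_spi_le (hf : Measurable f) (hC : ∀ x, |f x| ≤ C) (hC0 : 0 ≤ C)
    (ss : Fin r → SignedMeasure α) :
    |signedPiIntegral ss f| ≤ C * ∏ i, tvNorm (ss i) := by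
  rw [spi_def]
  refine (Finset.abs_sum_le_sum_abs _ _).trans ?_
  have h1 : ∀ ε : Fin r → Bool, |sgn ε * spiM ss f ε|
      ≤ C * ∏ i, (jpart (ε i) (ss i) Set.univ).toReal := by
    intro ε
    rw [abs_mul, abs_sgn, one_mul]
    have hb := norm_integral_le_of_norm_le_const
      (μ := Measure.pi fun i => jpart (ε i) (ss i)) (f := f) (C := C)
      (Filter.Eventually.of_forall fun x => by simpa [Real.norm_eq_abs] using hC x)
    simpa [spiM, Real.norm_eq_abs, Measure.real, Measure.pi_univ, ENNReal.toReal_prod] using hb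
  refine (Finset.sum_le_sum fun ε _ => h1 ε).trans ?_
  rw [← Finset.mul_sum]
  have hsum : ∑ ε : Fin r → Bool, ∏ i, (jpart (ε i) (ss i) Set.univ).toReal
      = ∏ i, tvNorm (ss i) := by
    have h2 : ∀ i : Fin r, tvNorm (ss i)
        = ∑ b ∈ (Finset.univ : Finset Bool), (jpart b (ss i) Set.univ).toReal := by
      intro i
      rw [tvNorm_eq]
      simp
    rw [Finset.prod_congr rfl fun i _ => h2 i, Finset.prod_univ_sum]
    rw [Fintype.piFinset_univ]
  rw [hsum]

end Stmt12Aux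

/-- First-order expansion of `P ↦ P^{⊗r}`:
`(μ + tν)^{⊗r}(f) = μ^{⊗r}(f) + t ∑_j (μ^{⊗(j−1)} ⊗ ν ⊗ μ^{⊗(r−j)})(f) + O(t²)`,
with the second-order term bounded by `t² 2^r ‖f‖_∞ (‖μ‖ + ‖ν‖)^r`. -/
theorem stmt_12 {α : Type*} [MeasurableSpace α] (r : ℕ)
    (μ ν : SignedMeasure α) (f : (Fin r → α) → ℝ) (hf : Measurable f)
    (C : ℝ) (hC : ∀ x, |f x| ≤ C) (t : ℝ) (ht : |t| ≤ 1) :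
    |signedPiIntegral (fun _ => μ + t • ν) f - signedPiIntegral (fun _ => μ) f -
        t * ∑ j : Fin r, signedPiIntegral (fun i => if i = j then ν else μ) f|
      ≤ t ^ 2 * 2 ^ r * C * (tvNorm μ + tvNorm ν) ^ r := by
  classical
  rcases isEmpty_or_nonempty (Fin r → α) with hemp | hne
  · have hr : r ≠ 0 := by
      rintro rfl
      exact hemp.false (fun i => i.elim0)
    haveI : IsEmpty α := ⟨fun a => hemp.false (fun _ => a)⟩
    have hz : ∀ ss : Fin r → SignedMeasure α, signedPiIntegral ss f = 0 := fun ss => by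
      rw [Stmt12Aux.spi_def]
      haveI := hemp
      simp [Stmt12Aux.spiM, MeasureTheory.integral_of_isEmpty]
    have htv : ∀ s : SignedMeasure α, tvNorm s = 0 := fun s => by
      rw [tvNorm, Set.univ_eq_empty_iff.2 inferInstance]
      simp
    simp [hz, htv, zero_pow hr]
  · have hC0 : 0 ≤ C := le_trans (abs_nonneg _) (hC (Classical.arbitrary _))
    have hTapp : ∀ ss, Stmt12Aux.spiMap (r := r) f hf C hC ss
        = signedPiIntegral ss f := fun ss => rfl
    let g : Finset (Fin r) → ℝ :=
      fun S => t ^ S.card * signedPiIntegral (S.piecewise (fun _ => ν) (fun _ => μ)) f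
    have hexp : signedPiIntegral (fun _ => μ + t • ν) f = ∑ S : Finset (Fin r), g S := by
      have h0 : (fun _ : Fin r => μ + t • ν)
          = (fun _ : Fin r => t • ν) + (fun _ : Fin r => μ) := by
        funext i
        simp [add_comm]
      rw [← hTapp, h0, (Stmt12Aux.spiMap (r := r) f hf C hC).map_add_univ]
      refine Finset.sum_congr rfl fun S _ => ?_
      have hpw : S.piecewise (fun _ : Fin r => t • ν) (fun _ : Fin r => μ)
          = fun i => (if i ∈ S then t else 1)
              • (S.piecewise (fun _ : Fin r => ν) (fun _ : Fin r => μ)) i := by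
        funext i
        by_cases h : i ∈ S <;> simp [Finset.piecewise, h]
      rw [hpw, (Stmt12Aux.spiMap (r := r) f hf C hC).map_smul_univ, Finset.prod_ite_mem, Finset.univ_inter, Finset.prod_const,
        smul_eq_mul, hTapp]
    have hzero : g ∅ = signedPiIntegral (fun _ : Fin r => μ) f := by
      show t ^ (∅ : Finset (Fin r)).card * _ = _
      rw [Finset.card_empty, pow_zero, one_mul, Finset.piecewise_empty]
    have hone : ∀ j : Fin r,
        g {j} = t * signedPiIntegral (fun i => if i = j then ν else μ) f := by
      intro j
      show t ^ ({j} : Finset (Fin r)).card * _ = _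
      rw [Finset.card_singleton, pow_one]
      congr 2
      funext i
      by_cases h : i = j <;> simp [Finset.piecewise, h]
    have hsplit : ∑ S : Finset (Fin r), g S
        = g ∅ + (∑ j : Fin r, g {j})
          + ∑ S ∈ Finset.univ.filter (fun S : Finset (Fin r) => 2 ≤ S.card), g S := by
      rw [← Finset.sum_filter_add_sum_filter_not Finset.univ
        (fun S : Finset (Fin r) => S.card ≤ 1) g]
      congr 1
      · have hset : Finset.univ.filter (fun S : Finset (Fin r) => S.card ≤ 1)
            = insert ∅ (Finset.univ.image fun j : Fin r => ({j} : Finset (Fin r))) := by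
          ext S
          simp only [Finset.mem_filter, Finset.mem_univ, true_and, Finset.mem_insert,
            Finset.mem_image]
          constructor
          · intro h
            rcases Nat.le_one_iff_eq_zero_or_eq_one.1 h with h0 | h1
            · exact Or.inl (Finset.card_eq_zero.1 h0)
            · obtain ⟨a, ha⟩ := Finset.card_eq_one.1 h1
              exact Or.inr ⟨a, ha.symm⟩
          · rintro (rfl | ⟨a, -, rfl⟩) <;> simp
        rw [hset, Finset.sum_insert (by simp), Finset.sum_image
          (fun x _ y _ h => Finset.singleton_injective h)]
      · congr 1
        ext S
        simp only [Finset.mem_filter, Finset.mem_univ, true_and, not_le]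
        omega
    have hterm : ∀ S ∈ Finset.univ.filter (fun S : Finset (Fin r) => 2 ≤ S.card),
        |g S| ≤ t ^ 2 * (C * (tvNorm μ + tvNorm ν) ^ r) := by
      intro S hS
      have h2 : 2 ≤ S.card := (Finset.mem_filter.1 hS).2
      have hb1 : |t| ^ S.card ≤ |t| ^ 2 := pow_le_pow_of_le_one (abs_nonneg t) ht h2
      have hb2 : |signedPiIntegral (S.piecewise (fun _ => ν) (fun _ => μ)) f|
          ≤ C * (tvNorm μ + tvNorm ν) ^ r := by
        refine (Stmt12Aux.abs_spi_le hf hC hC0 _).trans ?_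
        refine mul_le_mul_of_nonneg_left ?_ hC0
        have : (tvNorm μ + tvNorm ν) ^ r = ∏ _i : Fin r, (tvNorm μ + tvNorm ν) := by
          rw [Finset.prod_const, Finset.card_univ, Fintype.card_fin]
        rw [this]
        refine Finset.prod_le_prod (fun i _ => Stmt12Aux.tvNorm_nonneg _) (fun i _ => ?_)
        by_cases h : i ∈ S
        · simp only [Finset.piecewise, h, if_pos]
          exact le_add_of_nonneg_left (Stmt12Aux.tvNorm_nonneg μ)
        · simp only [Finset.piecewise, h, if_neg, if_false]
          exact le_add_of_nonneg_right (Stmt12Aux.tvNorm_nonneg ν)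
      calc |g S| = |t| ^ S.card
            * |signedPiIntegral (S.piecewise (fun _ => ν) (fun _ => μ)) f| := by
              rw [abs_mul, abs_pow]
        _ ≤ |t| ^ 2 * (C * (tvNorm μ + tvNorm ν) ^ r) :=
              mul_le_mul hb1 hb2 (abs_nonneg _)
                (pow_nonneg (abs_nonneg t) 2)
        _ = t ^ 2 * (C * (tvNorm μ + tvNorm ν) ^ r) := by rw [sq_abs]
    have hmain : signedPiIntegral (fun _ => μ + t • ν) f
          - signedPiIntegral (fun _ => μ) f
          - t * ∑ j : Fin r, signedPiIntegral (fun i => if i = j then ν else μ) f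
        = ∑ S ∈ Finset.univ.filter (fun S : Finset (Fin r) => 2 ≤ S.card), g S := by
      rw [hexp, hsplit, hzero]
      have : (∑ j : Fin r, g {j})
          = t * ∑ j : Fin r, signedPiIntegral (fun i => if i = j then ν else μ) f := by
        rw [Finset.mul_sum]
        exact Finset.sum_congr rfl fun j _ => hone j
      rw [this]
      ring
    rw [hmain]
    refine (Finset.abs_sum_le_sum_abs _ _).trans ?_
    refine (Finset.sum_le_sum hterm).trans ?_
    rw [Finset.sum_const, nsmul_eq_mul]
    have hcard : ((Finset.univ.filter (fun S : Finset (Fin r) => 2 ≤ S.card)).card : ℝ)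
        ≤ (2 : ℝ) ^ r := by
      have := Finset.card_filter_le Finset.univ (fun S : Finset (Fin r) => 2 ≤ S.card)
      rw [Finset.card_univ, Fintype.card_finset, Fintype.card_fin] at this
      calc ((Finset.univ.filter (fun S : Finset (Fin r) => 2 ≤ S.card)).card : ℝ)
          ≤ ((2 ^ r : ℕ) : ℝ) := by exact_mod_cast this
        _ = (2 : ℝ) ^ r := by push_cast; ring
    calc ((Finset.univ.filter (fun S : Finset (Fin r) => 2 ≤ S.card)).card : ℝ)
          * (t ^ 2 * (C * (tvNorm μ + tvNorm ν) ^ r))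
        ≤ (2 : ℝ) ^ r * (t ^ 2 * (C * (tvNorm μ + tvNorm ν) ^ r)) := by
          refine mul_le_mul_of_nonneg_right hcard ?_
          exact mul_nonneg (sq_nonneg t) (mul_nonneg hC0 (pow_nonneg
            (add_nonneg (Stmt12Aux.tvNorm_nonneg μ) (Stmt12Aux.tvNorm_nonneg ν)) r))
      _ = t ^ 2 * 2 ^ r * C * (tvNorm μ + tvNorm ν) ^ r := by ring
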